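/- For every nonzero λ = (λ₁, …, λ_n) ∈ k^n, the homomorphism space Hom(B(λ), C) is one-dimensional; concretely, the k-vector space {(x, y) ∈ C₁ × C₂ : α_i(x) = λ_i · y for all i = 1, …, n} has dimension 1, being spanned by the pair (d(Σ_i λ_i c_i), Σ_i λ_i c_i). -/

import Mathlib

/-!
The canonical bristled `n`-Kronecker module `C = (C₁, C₂; α₁, …, α_n)`:
`C₂ = Fin n → k` with standard basis `c_i`, and `C₁ = Sym2 (Fin n) → k` with
standard basis `c_{ij}` indexed by unordered pairs `{i,j}`.
`α_r` is given by `(α_r x) i = x {i, r}`.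
For a nonzero `λ ∈ k^n`, the bristle `B(λ)` is the Kronecker module
`(k, k; λ₁, …, λ_n)`; a homomorphism `B(λ) → C` is a pair of linear maps
`(g₁ : k → C₁, g₂ : k → C₂)` with `α_i ∘ g₁ = g₂ ∘ (λ_i ·)` for all `i`.
Such a pair is determined by `(x, y) = (g₁ 1, g₂ 1)`, subject to
`α_i(x) = λ_i • y` for all `i`; so `Hom(B(λ), C)` is identified with the
subspace `{(x, y) ∈ C₁ × C₂ : α_i(x) = λ_i • y for all i}`.
-/

/-- The structure map `α_r : C₁ → C₂` of the canonical bristled module. -/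
def canAlpha (k : Type*) [Field k] (n : ℕ) (r : Fin n) :
    (Sym2 (Fin n) → k) →ₗ[k] (Fin n → k) where
  toFun x i := x (Sym2.mk i r)
  map_add' _ _ := rfl
  map_smul' _ _ := rfl

/-- `d(c) = Σ_{i ≤ j} λ_i λ_j c_{ij}` for `c = Σ_i λ_i c_i`. -/
def dvec {k : Type*} [Field k] {n : ℕ} (c : Fin n → k) : Sym2 (Fin n) → k :=
  Sym2.lift ⟨fun i j => c i * c j, fun i j => mul_comm (c i) (c j)⟩

/-- The space `Hom(B(λ), C) = {(x, y) ∈ C₁ × C₂ : α_i(x) = λ_i • y for all i}`. -/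
def homSpace {k : Type*} [Field k] {n : ℕ} (lam : Fin n → k) :
    Submodule k ((Sym2 (Fin n) → k) × (Fin n → k)) where
  carrier := {p | ∀ i, canAlpha k n i p.1 = lam i • p.2}
  add_mem' := by
    intro p q hp hq i
    simp [map_add, hp i, hq i, smul_add]
  zero_mem' := by
    intro i
    simp
  smul_mem' := by
    intro a p hp i
    simp only [Prod.smul_fst, Prod.smul_snd, map_smul, hp i]
    rw [smul_comm]

/-- For every nonzero `λ ∈ k^n`, `Hom(B(λ), C)` is one-dimensional,
spanned by the pair `(d(Σ λ_i c_i), Σ λ_i c_i)`. -/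
theorem homSpace_from_bristle_is_one_dimensional
    {k : Type*} [Field k] {n : ℕ} (hn : 1 ≤ n)
    (lam : Fin n → k) (hlam : lam ≠ 0) :
    Module.finrank k (homSpace lam) = 1 ∧
    homSpace lam = Submodule.span k {((dvec lam, lam) :
      (Sym2 (Fin n) → k) × (Fin n → k))} := by
  have hmem : ((dvec lam, lam) : (Sym2 (Fin n) → k) × (Fin n → k)) ∈ homSpace lam := by
    intro i
    funext j
    show dvec lam (Sym2.mk j i) = lam i * lam j
    simp [dvec, mul_comm]
  have hspan : homSpace lam = Submodule.span k {((dvec lam, lam) :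
      (Sym2 (Fin n) → k) × (Fin n → k))} := by
    apply le_antisymm
    · rintro ⟨x, y⟩ hp
      obtain ⟨i₀, hi₀⟩ : ∃ i, lam i ≠ 0 := Function.ne_iff.mp hlam
      set c := y i₀ / lam i₀ with hc
      have key : ∀ i j, x (Sym2.mk j i) = lam i * y j := by
        intro i j
        have := congrFun (hp i) j
        exact this
      have hy : ∀ j, y j = c * lam j := by
        intro j
        have h1 := key i₀ j
        have h2 := key j i₀
        rw [Sym2.eq_swap] at h2
        have : lam i₀ * y j = lam j * y i₀ := by rw [← h1, h2]
        rw [hc, div_mul_eq_mul_div, eq_div_iff hi₀]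
        linear_combination this
      rw [Submodule.mem_span_singleton]
      refine ⟨c, ?_⟩
      refine Prod.ext ?_ ?_
      · funext s
        induction s using Sym2.inductionOn with
        | hf i j =>
          have h1 := key j i
          show c * dvec lam (Sym2.mk i j) = x (Sym2.mk i j)
          rw [h1, hy i]
          simp [dvec]; ring
      · funext j
        exact (hy j).symm.trans rfl
    · rw [Submodule.span_le, Set.singleton_subset_iff]
      exact hmem
  have hne : ((dvec lam, lam) : (Sym2 (Fin n) → k) × (Fin n → k)) ≠ 0 := by
    intro h
    exact hlam (congrArg Prod.snd h)
  refine ⟨?_, hspan⟩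
  rw [hspan]
  exact finrank_span_singleton hne
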